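/- The twisted-cube support C(c,ℓ) is closed in ℝ^n if and only if m_σ ∈ P(c,ℓ) for every sign vector σ ∈ {+,−}^n, where P(c,ℓ) := {x ∈ ℝ^n : 0 ≤ x_j ≤ A_j(x) for all 1 ≤ j ≤ n}. -/

import Mathlib

/-- The affine functions `A_j(x) = ℓ_j − Σ_{k>j} c_{jk} x_k` (for the top index the sum
is empty so `A_n = ℓ_n`). Indices are 0-based via `Fin n`. -/
def Afun (n : ℕ) (c : Fin n → Fin n → ℤ) (L : Fin n → ℤ) (j : Fin n) (x : Fin n → ℝ) : ℝ :=
  (L j : ℝ) - ∑ k ∈ Finset.univ.filter (fun k => j < k), (c j k : ℝ) * x k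

/-- Condition (S-k): `A_k(x) < x_k < 0` or `0 ≤ x_k ≤ A_k(x)`. -/
def Scond (n : ℕ) (c : Fin n → Fin n → ℤ) (L : Fin n → ℤ) (k : Fin n) (x : Fin n → ℝ) : Prop :=
  (Afun n c L k x < x k ∧ x k < 0) ∨ (0 ≤ x k ∧ x k ≤ Afun n c L k x)

/-- The twisted-cube support `C(c,ℓ)`. -/
def Cset (n : ℕ) (c : Fin n → Fin n → ℤ) (L : Fin n → ℤ) : Set (Fin n → ℝ) :=
  {x | ∀ k, Scond n c L k x}

/-- The polytope `P(c,ℓ) = {x : 0 ≤ x_j ≤ A_j(x) for all j}`. -/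
def Pset (n : ℕ) (c : Fin n → Fin n → ℤ) (L : Fin n → ℤ) : Set (Fin n → ℝ) :=
  {x | ∀ j, 0 ≤ x j ∧ x j ≤ Afun n c L j x}

/-- Condition (P): for each `k`, whenever the coordinates above `k` satisfy
`0 ≤ x_j ≤ A_j(x)`, one has `A_k(x) ≥ 0`. (For the top index this says `ℓ_n ≥ 0`.) -/
def CondP (n : ℕ) (c : Fin n → Fin n → ℤ) (L : Fin n → ℤ) : Prop :=
  ∀ k : Fin n, ∀ x : Fin n → ℝ,
    (∀ j : Fin n, k < j → 0 ≤ x j ∧ x j ≤ Afun n c L j x) →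
    0 ≤ Afun n c L k x

/-- The Cartier data `m_σ` for a sign vector `σ` (`true` = `+`, `false` = `−`), defined by
downward recursion: `m_{σ,j} = 0` if `σ_j = +`, and `m_{σ,j} = A_j(m_σ)` if `σ_j = −`. -/
noncomputable def mvec (n : ℕ) (c : Fin n → Fin n → ℤ) (L : Fin n → ℤ)
    (σ : Fin n → Bool) (j : Fin n) : ℝ :=
  if σ j then 0
  else (L j : ℝ) - ∑ k ∈ (Finset.univ.filter (fun k => j < k)).attach,
      (c j k.1 : ℝ) * mvec n c L σ k.1
termination_by n - j.1
decreasing_by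
  have hk := Fin.lt_iff_val_lt_val.mp (Finset.mem_filter.mp k.2).2
  have := k.1.isLt
  omega


-- reverse (downward) induction on Fin n
lemma fin_rev_ind {n : ℕ} {P : Fin n → Prop}
    (h : ∀ j : Fin n, (∀ i : Fin n, j < i → P i) → P j) : ∀ j, P j := by
  have key : ∀ m : ℕ, ∀ j : Fin n, n - j.1 ≤ m → P j := by
    intro m
    induction m with
    | zero => intro j hj; have := j.isLt; omega
    | succ m ih =>
      intro j hj
      exact h j (fun i hi => ih i (by have := i.isLt; have := Fin.lt_iff_val_lt_val.mp hi; omega))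
  exact fun j => key n j (by omega)

lemma afun_congr {n : ℕ} (c : Fin n → Fin n → ℤ) (L : Fin n → ℤ) (j : Fin n)
    {x y : Fin n → ℝ} (h : ∀ i, j < i → x i = y i) :
    Afun n c L j x = Afun n c L j y := by
  unfold Afun
  congr 1
  exact Finset.sum_congr rfl (fun i hi => by
    rw [h i (Finset.mem_filter.mp hi).2])

lemma afun_continuous {n : ℕ} (c : Fin n → Fin n → ℤ) (L : Fin n → ℤ) (j : Fin n) :
    Continuous (Afun n c L j) := by
  unfold Afun
  exact continuous_const.sub (continuous_finset_sum _ fun k _ =>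
    continuous_const.mul (continuous_apply k))

lemma mvec_eq {n : ℕ} (c : Fin n → Fin n → ℤ) (L : Fin n → ℤ) (σ : Fin n → Bool) (j : Fin n) :
    mvec n c L σ j = if σ j then 0 else Afun n c L j (mvec n c L σ) := by
  rw [mvec, Finset.sum_attach _ (fun k => (c j k : ℝ) * mvec n c L σ k)]
  rfl

lemma mvec_congr {n : ℕ} (c : Fin n → Fin n → ℤ) (L : Fin n → ℤ) {σ σ' : Fin n → Bool}
    (j : Fin n) (h : ∀ i, j ≤ i → σ i = σ' i) :
    mvec n c L σ j = mvec n c L σ' j := by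
  induction j using fin_rev_ind with
  | h j ih =>
    rw [mvec_eq, mvec_eq, h j le_rfl]
    by_cases hs : σ' j
    · simp [hs]
    · simp only [hs, if_false]
      congr 1
      unfold Afun
      congr 1
      refine Finset.sum_congr rfl (fun i hi => ?_)
      have hji := (Finset.mem_filter.mp hi).2
      rw [ih i hji (fun i' hi' => h i' (le_of_lt (lt_of_lt_of_le hji hi')))]

/-- CondP implies every `m_σ` lies in `P`. -/
lemma condP_mvec {n : ℕ} {c : Fin n → Fin n → ℤ} {L : Fin n → ℤ} (hP : CondP n c L)
    (σ : Fin n → Bool) : mvec n c L σ ∈ Pset n c L := by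
  intro j
  induction j using fin_rev_ind with
  | h j ih =>
    have hA : 0 ≤ Afun n c L j (mvec n c L σ) := hP j _ (fun i hi => ih i hi)
    rw [mvec_eq]
    by_cases hs : σ j <;> simp [hs, hA]

/-- The key minimization lemma: any linear functional of the coordinates above `k`,
evaluated at a point of the partial polytope, is at most its value at some `m_σ`. -/
lemma key_min {n : ℕ} (c : Fin n → Fin n → ℤ) (L : Fin n → ℤ) :
    ∀ m : ℕ, ∀ k : Fin n, n - 1 - k.1 ≤ m → ∀ x : Fin n → ℝ,
    (∀ j : Fin n, k < j → 0 ≤ x j ∧ x j ≤ Afun n c L j x) →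
    ∀ d : Fin n → ℝ, ∃ σ : Fin n → Bool,
      ∑ j ∈ Finset.univ.filter (fun j => k < j), d j * x j ≤
      ∑ j ∈ Finset.univ.filter (fun j => k < j), d j * mvec n c L σ j := by
  intro m
  induction m with
  | zero =>
    intro k hk x hx d
    have hk1 : k.1 = n - 1 := by have := k.isLt; omega
    have hempty : Finset.univ.filter (fun j : Fin n => k < j) = ∅ := by
      apply Finset.filter_false_of_mem
      intro j _
      have := j.isLt
      simp only [Fin.lt_iff_val_lt_val]
      omega
    exact ⟨fun _ => true, by simp [hempty]⟩
  | succ m ih =>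
    intro k hk x hx d
    by_cases htop : k.1 + 1 < n
    · -- k' = k+1 exists
      set k' : Fin n := ⟨k.1 + 1, htop⟩ with hk'def
      have hkk' : k < k' := by simp [Fin.lt_iff_val_lt_val, hk'def]
      have hsplit : Finset.univ.filter (fun j : Fin n => k < j)
          = insert k' (Finset.univ.filter (fun j : Fin n => k' < j)) := by
        ext j
        simp only [Finset.mem_insert, Finset.mem_filter, Finset.mem_univ, true_and,
          Fin.lt_iff_val_lt_val, Fin.ext_iff, hk'def, Fin.val_mk]
        omega
      have hnotmem : k' ∉ Finset.univ.filter (fun j : Fin n => k' < j) := by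
        simp
      have hx' : ∀ j : Fin n, k' < j → 0 ≤ x j ∧ x j ≤ Afun n c L j x :=
        fun j hj => hx j (lt_trans hkk' hj)
      have hxk' : 0 ≤ x k' ∧ x k' ≤ Afun n c L k' x := hx k' hkk'
      have hm : n - 1 - k'.1 ≤ m := by simp [hk'def]; omega
      by_cases hd : d k' ≤ 0
      · obtain ⟨σ, hσ⟩ := ih k' hm x hx' d
        refine ⟨Function.update σ k' true, ?_⟩
        have hupd : ∀ j : Fin n, k' < j →
            mvec n c L (Function.update σ k' true) j = mvec n c L σ j := by
          intro j hj
          apply mvec_congr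
          intro i hi
          apply Function.update_of_ne
          intro hik
          rw [hik] at hi
          exact absurd (lt_of_lt_of_le hj hi) (lt_irrefl _)
        have hmk' : mvec n c L (Function.update σ k' true) k' = 0 := by
          rw [mvec_eq]; simp
        rw [hsplit, Finset.sum_insert hnotmem, Finset.sum_insert hnotmem, hmk']
        have h1 : d k' * x k' ≤ 0 := mul_nonpos_of_nonpos_of_nonneg hd hxk'.1
        have h2 : ∑ j ∈ Finset.univ.filter (fun j : Fin n => k' < j),
            d j * mvec n c L (Function.update σ k' true) j
            = ∑ j ∈ Finset.univ.filter (fun j : Fin n => k' < j), d j * mvec n c L σ j :=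
          Finset.sum_congr rfl (fun j hj => by
            rw [hupd j (Finset.mem_filter.mp hj).2])
        rw [h2]
        linarith
      · push_neg at hd
        -- substitute x k' = Afun k' x ; new coefficients
        set d' : Fin n → ℝ := fun j => d j - d k' * (c k' j : ℝ) with hd'def
        obtain ⟨σ, hσ⟩ := ih k' hm x hx' d'
        refine ⟨Function.update σ k' false, ?_⟩
        set σ' := Function.update σ k' false with hσ'def
        have hupd : ∀ j : Fin n, k' < j → mvec n c L σ' j = mvec n c L σ j := by
          intro j hj
          apply mvec_congr
          intro i hi
          apply Function.update_of_ne
          intro hik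
          rw [hik] at hi
          exact absurd (lt_of_lt_of_le hj hi) (lt_irrefl _)
        have hmk' : mvec n c L σ' k' = Afun n c L k' (mvec n c L σ') := by
          rw [mvec_eq]; simp [hσ'def]
        rw [hsplit, Finset.sum_insert hnotmem, Finset.sum_insert hnotmem, hmk']
        -- expand Afun at k' on both sides
        have expandm : Afun n c L k' (mvec n c L σ')
            = (L k' : ℝ) - ∑ j ∈ Finset.univ.filter (fun j : Fin n => k' < j),
                (c k' j : ℝ) * mvec n c L σ j := by
          unfold Afun
          congr 1
          exact Finset.sum_congr rfl (fun j hj => by rw [hupd j (Finset.mem_filter.mp hj).2])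
        have hsum' : ∑ j ∈ Finset.univ.filter (fun j : Fin n => k' < j), d j * mvec n c L σ' j
            = ∑ j ∈ Finset.univ.filter (fun j : Fin n => k' < j), d j * mvec n c L σ j :=
          Finset.sum_congr rfl (fun j hj => by rw [hupd j (Finset.mem_filter.mp hj).2])
        rw [hsum', expandm]
        have hxbound : d k' * x k' ≤ d k' * Afun n c L k' x :=
          mul_le_mul_of_nonneg_left hxk'.2 (le_of_lt hd)
        have expandx : Afun n c L k' x = (L k' : ℝ)
            - ∑ j ∈ Finset.univ.filter (fun j : Fin n => k' < j), (c k' j : ℝ) * x j := rfl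
        rw [expandx] at hxbound
        -- rewrite hσ
        have hde : ∀ (y : Fin n → ℝ),
            ∑ j ∈ Finset.univ.filter (fun j : Fin n => k' < j), d' j * y j
            = ∑ j ∈ Finset.univ.filter (fun j : Fin n => k' < j), d j * y j
              - d k' * ∑ j ∈ Finset.univ.filter (fun j : Fin n => k' < j), (c k' j : ℝ) * y j := by
          intro y
          rw [Finset.mul_sum, ← Finset.sum_sub_distrib]
          exact Finset.sum_congr rfl (fun j _ => by simp [hd'def]; ring)
        rw [hde, hde] at hσ
        set Sx := ∑ j ∈ Finset.univ.filter (fun j : Fin n => k' < j), d j * x j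
        set Sm := ∑ j ∈ Finset.univ.filter (fun j : Fin n => k' < j), d j * mvec n c L σ j
        set Cx := ∑ j ∈ Finset.univ.filter (fun j : Fin n => k' < j), (c k' j : ℝ) * x j
        set Cm := ∑ j ∈ Finset.univ.filter (fun j : Fin n => k' < j), (c k' j : ℝ) * mvec n c L σ j
        -- hσ : Sx - d k' * Cx ≤ Sm - d k' * Cm
        -- hxbound : d k' * x k' ≤ d k' * (L k' - Cx)
        -- goal : d k' * x k' + Sx ≤ d k' * (L k' - Cm) + Sm
        nlinarith [hσ, hxbound]
    · -- k is the top index: filter is empty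
      have hempty : Finset.univ.filter (fun j : Fin n => k < j) = ∅ := by
        apply Finset.filter_false_of_mem
        intro j _
        have := j.isLt
        simp only [Fin.lt_iff_val_lt_val]
        omega
      exact ⟨fun _ => true, by simp [hempty]⟩

/-- Pset is closed. -/
lemma pset_closed {n : ℕ} (c : Fin n → Fin n → ℤ) (L : Fin n → ℤ) :
    IsClosed (Pset n c L) := by
  have : Pset n c L = ⋂ j : Fin n, ({x : Fin n → ℝ | 0 ≤ x j} ∩ {x | x j ≤ Afun n c L j x}) := by
    ext x
    simp [Pset, Set.mem_iInter, forall_and]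
  rw [this]
  exact isClosed_iInter fun j =>
    (isClosed_le continuous_const (continuous_apply j)).inter
      (isClosed_le (continuous_apply j) (afun_continuous c L j))

/-- Under CondP, Cset = Pset. -/
lemma cset_eq_pset {n : ℕ} {c : Fin n → Fin n → ℤ} {L : Fin n → ℤ} (hP : CondP n c L) :
    Cset n c L = Pset n c L := by
  ext x
  constructor
  · intro hx j
    induction j using fin_rev_ind with
    | h j ih =>
      have hA : 0 ≤ Afun n c L j x := hP j x (fun i hi => ih i hi)
      rcases hx j with ⟨h1, h2⟩ | h
      · linarith
      · exact h
  · intro hx k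
    exact Or.inr (hx k)

/-- fill in the coordinates below k so as to stay in Cset, with x k = A_k(x) + t. -/
noncomputable def fillPt (n : ℕ) (c : Fin n → Fin n → ℤ) (L : Fin n → ℤ) (k : Fin n)
    (x : Fin n → ℝ) (t : ℝ) (j : Fin n) : ℝ :=
  if k < j then x j
  else if j = k then Afun n c L k x + t
  else min 0 (((L j : ℝ) - ∑ i ∈ (Finset.univ.filter (fun i => j < i)).attach,
      (c j i.1 : ℝ) * fillPt n c L k x t i.1) / 2)
termination_by n - j.1
decreasing_by
  have hk := Fin.lt_iff_val_lt_val.mp (Finset.mem_filter.mp i.2).2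
  have := i.1.isLt
  omega

lemma fillPt_eq {n : ℕ} (c : Fin n → Fin n → ℤ) (L : Fin n → ℤ) (k : Fin n)
    (x : Fin n → ℝ) (t : ℝ) (j : Fin n) :
    fillPt n c L k x t j = if k < j then x j
      else if j = k then Afun n c L k x + t
      else min 0 (Afun n c L j (fillPt n c L k x t) / 2) := by
  rw [fillPt, Finset.sum_attach _ (fun i => (c j i : ℝ) * fillPt n c L k x t i)]
  rfl

lemma fillPt_above {n : ℕ} (c : Fin n → Fin n → ℤ) (L : Fin n → ℤ) (k : Fin n)
    (x : Fin n → ℝ) (t : ℝ) (j : Fin n) (h : k < j) :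
    fillPt n c L k x t j = x j := by
  rw [fillPt_eq, if_pos h]

lemma fillPt_afun {n : ℕ} (c : Fin n → Fin n → ℤ) (L : Fin n → ℤ) (k : Fin n)
    (x : Fin n → ℝ) (t : ℝ) (j : Fin n) (h : k ≤ j) :
    Afun n c L j (fillPt n c L k x t) = Afun n c L j x :=
  afun_congr c L j (fun i hi => fillPt_above c L k x t i (lt_of_le_of_lt h hi))

lemma fillPt_mem_Cset {n : ℕ} (c : Fin n → Fin n → ℤ) (L : Fin n → ℤ) (k : Fin n)
    (x : Fin n → ℝ) (hx : ∀ j : Fin n, k < j → 0 ≤ x j ∧ x j ≤ Afun n c L j x)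
    (t : ℝ) (ht0 : 0 < t) (ht1 : t < -(Afun n c L k x)) :
    fillPt n c L k x t ∈ Cset n c L := by
  intro j
  unfold Scond
  rcases lt_trichotomy k j with hkj | hkj | hkj
  · -- above k
    right
    rw [fillPt_above c L k x t j hkj, fillPt_afun c L k x t j (le_of_lt hkj)]
    exact hx j hkj
  · -- j = k
    left
    have h0 : fillPt n c L k x t j = Afun n c L k x + t := by
      rw [fillPt_eq, if_neg (hkj ▸ lt_irrefl k), if_pos hkj.symm]
    have hAf : Afun n c L j (fillPt n c L k x t) = Afun n c L k x := by
      rw [← hkj]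
      exact fillPt_afun c L k x t k le_rfl
    rw [h0, hAf]
    constructor <;> linarith
  · -- below k
    have h0 : fillPt n c L k x t j
        = min 0 (Afun n c L j (fillPt n c L k x t) / 2) := by
      rw [fillPt_eq, if_neg (not_lt_of_gt hkj), if_neg (Fin.ne_of_lt hkj)]
    rw [h0]
    set A := Afun n c L j (fillPt n c L k x t) with hA
    by_cases hs : 0 ≤ A
    · right
      rw [min_eq_left (by linarith)]
      exact ⟨le_rfl, hs⟩
    · left
      push_neg at hs
      rw [min_eq_right (by linarith)]
      constructor <;> linarith

lemma fillPt_continuous {n : ℕ} (c : Fin n → Fin n → ℤ) (L : Fin n → ℤ) (k : Fin n)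
    (x : Fin n → ℝ) (j : Fin n) :
    Continuous (fun t => fillPt n c L k x t j) := by
  induction j using fin_rev_ind with
  | h j ih =>
    have : (fun t => fillPt n c L k x t j) = fun t =>
        if k < j then x j else if j = k then Afun n c L k x + t
        else min 0 (((L j : ℝ) - ∑ i ∈ Finset.univ.filter (fun i => j < i),
            (c j i : ℝ) * fillPt n c L k x t i) / 2) := by
      funext t
      rw [fillPt_eq]
      rfl
    rw [this]
    by_cases h1 : k < j
    · simp only [if_pos h1]; exact continuous_const
    · simp only [if_neg h1]
      by_cases h2 : j = k
      · simp only [if_pos h2]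
        exact continuous_const.add continuous_id
      · simp only [if_neg h2]
        refine continuous_const.min (Continuous.div_const ?_ 2)
        refine continuous_const.sub (continuous_finset_sum _ fun i hi => ?_)
        exact continuous_const.mul (ih i (Finset.mem_filter.mp hi).2)

/-- Cset closed implies CondP. -/
lemma condP_of_closed {n : ℕ} {c : Fin n → Fin n → ℤ} {L : Fin n → ℤ}
    (hcl : IsClosed (Cset n c L)) : CondP n c L := by
  by_contra hP
  simp only [CondP, not_forall, not_le] at hP
  obtain ⟨k, x, hx, hAneg⟩ := hP
  set ε := -(Afun n c L k x) with hε
  have hεpos : 0 < ε := by simp [hε]; linarith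
  -- sequence
  have hseq : ∀ t : ℕ, fillPt n c L k x (ε / (t + 2)) ∈ Cset n c L := by
    intro t
    apply fillPt_mem_Cset c L k x hx
    · positivity
    · rw [← hε]
      rw [div_lt_iff₀ (by positivity)]
      nlinarith
  have hlim : Filter.Tendsto (fun t : ℕ => (ε / (t + 2) : ℝ)) Filter.atTop (nhds 0) := by
    apply Filter.Tendsto.div_atTop tendsto_const_nhds
    apply Filter.tendsto_atTop_add_const_right
    exact tendsto_natCast_atTop_atTop
  have hcont : Continuous (fun t => fillPt n c L k x t) := by
    apply continuous_pi
    intro j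
    exact fillPt_continuous c L k x j
  have htend : Filter.Tendsto (fun t : ℕ => fillPt n c L k x (ε / (t + 2)))
      Filter.atTop (nhds (fillPt n c L k x 0)) :=
    (hcont.tendsto 0).comp hlim
  have hmem : fillPt n c L k x 0 ∈ Cset n c L :=
    hcl.mem_of_tendsto htend (Filter.Eventually.of_forall hseq)
  -- contradiction: Scond at k fails for fillPt ... 0
  have h0 : fillPt n c L k x 0 k = Afun n c L k x := by
    rw [fillPt_eq, if_neg (lt_irrefl _), if_pos rfl, add_zero]
  have hAf : Afun n c L k (fillPt n c L k x 0) = Afun n c L k x :=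
    fillPt_afun c L k x 0 k le_rfl
  rcases hmem k with ⟨h1, _⟩ | ⟨h1, _⟩
  · rw [h0, hAf] at h1; exact lt_irrefl _ h1
  · rw [h0] at h1; linarith


/-- `C(c,ℓ)` is closed iff `m_σ ∈ P(c,ℓ)` for every sign vector `σ`. -/
theorem isClosed_Cset_iff_mvec_mem_Pset (n : ℕ) (hn : 0 < n)
    (c : Fin n → Fin n → ℤ) (L : Fin n → ℤ) :
    IsClosed (Cset n c L) ↔ ∀ σ : Fin n → Bool, mvec n c L σ ∈ Pset n c L := by
  constructor
  · intro hcl σ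
    exact condP_mvec (condP_of_closed hcl) σ
  · intro hσ
    have hP : CondP n c L := by
      intro k x hx
      obtain ⟨σ, hkey⟩ := key_min c L n k (by omega) x hx (fun j => (c k j : ℝ))
      have h1 : 0 ≤ Afun n c L k (mvec n c L σ) := by
        have := hσ σ k
        exact le_trans this.1 this.2
      have h2 : Afun n c L k (mvec n c L σ) ≤ Afun n c L k x := by
        unfold Afun
        linarith
      linarith
    rw [cset_eq_pset hP]
    exact pset_closed c L
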